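/- Let G = (V, E) be a finite undirected graph and x ∈ {0,1}^E satisfy the cycle inequality Σ_{e ∈ C \ {e'}} x(e) ≥ x(e') for every cycle C of G and every e' ∈ C. Then the relation u ~ v iff there exists a path from u to v using only edges e with x(e) = 0 is an equivalence relation on V, and for every edge uv ∈ E, x(uv) = 1 if and only if u and v are in different equivalence classes. -/
import Mathlib


/-- Converse multicut feasibility: a binary edge labeling satisfying all cycle
inequalities is the cut indicator of the partition into connected components of
the uncut subgraph: reachability by uncut edges is an equivalence relation, and
an edge is labeled 1 iff its endpoints lie in different classes. -/
theorem cycle_inequalities_give_partition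
    {V : Type*} [Fintype V] [DecidableEq V]
    (G : SimpleGraph V)
    (x : Sym2 V → ℝ)
    (hxbin : ∀ e ∈ G.edgeSet, x e = 0 ∨ x e = 1)
    (hcyc : ∀ (u : V) (p : G.Walk u u), p.IsTrail →
      ∀ e' ∈ p.edges, x e' ≤ ((p.edges.erase e').map x).sum) :
    Equivalence (fun u v : V => ∃ p : G.Walk u v, ∀ e ∈ p.edges, x e = 0) ∧
    ∀ u v : V, G.Adj u v →
      (x s(u, v) = 1 ↔ ¬ ∃ p : G.Walk u v, ∀ e ∈ p.edges, x e = 0) := by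
  constructor
  · constructor
    · intro u
      exact ⟨SimpleGraph.Walk.nil, by simp⟩
    · rintro u v ⟨p, hp⟩
      exact ⟨p.reverse, by simpa using hp⟩
    · rintro u v w ⟨p, hp⟩ ⟨q, hq⟩
      refine ⟨p.append q, ?_⟩
      intro e he
      rw [SimpleGraph.Walk.edges_append, List.mem_append] at he
      rcases he with h | h
      · exact hp e h
      · exact hq e h
  · intro u v huv
    constructor
    · rintro hx ⟨p, hp⟩
      -- replace p by a path (trail)
      set q := p.bypass with hq
      have hqzero : ∀ e ∈ q.edges, x e = 0 := fun e he =>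
        hp e (SimpleGraph.Walk.edges_bypass_subset p he)
      have hnot : s(v, u) ∉ q.edges := by
        intro hmem
        have := hqzero _ hmem
        rw [Sym2.eq_swap] at this
        rw [hx] at this
        norm_num at this
      set w := q.concat huv.symm with hw
      have hwe : w.edges = q.edges ++ [s(v, u)] := by rw [hw, SimpleGraph.Walk.edges_concat, List.concat_eq_append]
      have hwt : w.IsTrail := by
        rw [SimpleGraph.Walk.isTrail_def, hwe]
        refine List.Nodup.append (p.bypass_isPath.isTrail.edges_nodup) (List.nodup_singleton _) ?_
        intro a ha hb
        simp only [List.mem_singleton] at hb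
        subst hb
        exact hnot ha
      have hmem : s(v, u) ∈ w.edges := by rw [hwe]; simp
      have := hcyc u w hwt _ hmem
      rw [hwe, List.erase_append_right _ hnot] at this
      simp only [List.erase_cons_head, List.append_nil] at this
      have hsum : ((q.edges).map x).sum = 0 := by
        apply List.sum_eq_zero
        intro y hy
        rw [List.mem_map] at hy
        obtain ⟨e, he, rfl⟩ := hy
        exact hqzero e he
      rw [hsum, Sym2.eq_swap, hx] at this
      norm_num at this
    · intro hno
      rcases hxbin s(u, v) huv with h0 | h1
      · exfalso
        exact hno ⟨huv.toWalk, by simpa using h0⟩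
      · exact h1
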